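/- Let ħ > 0, let Σ be a real symmetric positive definite 2n×2n matrix, and let Ω_Σ = {z ∈ ℝ^{2n} : (1/2) Σ⁻¹ z·z ≤ 1}. Then Ω_Σ^{ħ,ω} = Ω_Σ if and only if there exists S ∈ Sp(n) such that Ω_Σ = S(B^{2n}(√ħ)), i.e. if and only if Ω_Σ is a quantum blob. -/

import Mathlib

open Matrix ComplexOrder MeasureTheory

noncomputable section

/-- Phase space ℝ^{2n} ≃ ℝⁿ × ℝⁿ, with coordinates z = (x,p). -/
abbrev PS (n : ℕ) := Fin n ⊕ Fin n → ℝ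

/-- The standard symplectic matrix J = [[0, I], [-I, 0]]. -/
def Jmat (n : ℕ) : Matrix (Fin n ⊕ Fin n) (Fin n ⊕ Fin n) ℝ :=
  Matrix.fromBlocks 0 1 (-1) 0

/-- The standard symplectic form ω(z,z′) = (Jz)·z′. -/
def symp (n : ℕ) (z z' : PS n) : ℝ := (Jmat n).mulVec z ⬝ᵥ z'

/-- The symplectic group Sp(n) = {S : SᵀJS = J}. -/
def Sp (n : ℕ) : Set (Matrix (Fin n ⊕ Fin n) (Fin n ⊕ Fin n) ℝ) :=
  {S | Sᵀ * Jmat n * S = Jmat n}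

/-- Symplectic ℏ-polar dual Ω^{ℏ,ω} = {z′ : sup_{z∈Ω} ω(z,z′) ≤ ℏ}. -/
def sympDual (n : ℕ) (ℏ : ℝ) (Ω : Set (PS n)) : Set (PS n) :=
  {z' | ∀ z ∈ Ω, symp n z z' ≤ ℏ}

/-- The closed Euclidean ball B^{2n}(√ℏ) of radius √ℏ centered at 0. -/
def ball2n (n : ℕ) (ℏ : ℝ) : Set (PS n) := {z | z ⬝ᵥ z ≤ ℏ}

/-- The covariance ellipsoid Ω_Σ = {z : (1/2)Σ⁻¹z·z ≤ 1}. -/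
def covEll (n : ℕ) (Sig : Matrix (Fin n ⊕ Fin n) (Fin n ⊕ Fin n) ℝ) : Set (PS n) :=
  {z | (1 / 2 : ℝ) * (Sig⁻¹.mulVec z ⬝ᵥ z) ≤ 1}

/-! ### Auxiliary lemmas -/

set_option linter.unusedSectionVars false

section Aux

variable {ι : Type*} [Fintype ι] [DecidableEq ι]

lemma QB.Jmat_transpose (n : ℕ) : (Jmat n)ᵀ = - Jmat n := by
  simp only [Jmat, fromBlocks_transpose, transpose_zero, transpose_one, transpose_neg,
    Matrix.fromBlocks_neg, neg_zero, neg_neg]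

lemma QB.Jmat_mul_transpose (n : ℕ) : Jmat n * (Jmat n)ᵀ = 1 := by
  rw [QB.Jmat_transpose]
  simp only [Jmat, Matrix.mul_neg, fromBlocks_multiply, Matrix.zero_mul, Matrix.one_mul,
    Matrix.mul_zero, Matrix.neg_mul, Matrix.mul_one, zero_add, add_zero, neg_neg, neg_zero,
    Matrix.fromBlocks_neg, ← fromBlocks_one]

lemma QB.Jmat_transpose_mul (n : ℕ) : (Jmat n)ᵀ * Jmat n = 1 := by
  rw [QB.Jmat_transpose]
  simp only [Jmat, Matrix.neg_mul, fromBlocks_multiply, Matrix.zero_mul, Matrix.one_mul,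
    Matrix.mul_zero, Matrix.mul_one, Matrix.mul_neg, zero_add, add_zero, neg_neg, neg_zero,
    Matrix.fromBlocks_neg, ← fromBlocks_one]

lemma QB.isUnit_det_Jmat (n : ℕ) : IsUnit (Jmat n).det := by
  have hdet : (Jmat n).det * (Jmat n)ᵀ.det = 1 := by
    rw [← det_mul, QB.Jmat_mul_transpose, det_one]
  exact isUnit_iff_exists_inv.mpr ⟨_, hdet⟩

lemma QB.dot_symm {A : Matrix ι ι ℝ} (hA : Aᵀ = A) (x y : ι → ℝ) :
    x ⬝ᵥ A *ᵥ y = y ⬝ᵥ A *ᵥ x := by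
  rw [dotProduct_mulVec, ← mulVec_transpose, hA, dotProduct_comm]

lemma QB.single_dot_mulVec (A : Matrix ι ι ℝ) (i j : ι) :
    (Pi.single i 1 : ι → ℝ) ⬝ᵥ A *ᵥ (Pi.single j 1) = A i j := by
  simp [mulVec_single, dotProduct, Pi.single_apply]

lemma QB.qf_eq {A B : Matrix ι ι ℝ} (hA : Aᵀ = A) (hB : Bᵀ = B)
    (h : ∀ z, z ⬝ᵥ A *ᵥ z = z ⬝ᵥ B *ᵥ z) : A = B := by
  have key : ∀ x y : ι → ℝ, x ⬝ᵥ A *ᵥ y = x ⬝ᵥ B *ᵥ y := by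
    intro x y
    have hxy := h (x + y)
    have hx := h x
    have hy := h y
    have eA : (x + y) ⬝ᵥ A *ᵥ (x + y) = x ⬝ᵥ A *ᵥ x + 2 * (x ⬝ᵥ A *ᵥ y) + y ⬝ᵥ A *ᵥ y := by
      simp only [mulVec_add, dotProduct_add, add_dotProduct]; rw [QB.dot_symm hA y x]; ring
    have eB : (x + y) ⬝ᵥ B *ᵥ (x + y) = x ⬝ᵥ B *ᵥ x + 2 * (x ⬝ᵥ B *ᵥ y) + y ⬝ᵥ B *ᵥ y := by
      simp only [mulVec_add, dotProduct_add, add_dotProduct]; rw [QB.dot_symm hB y x]; ring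
    rw [eA, eB, hx, hy] at hxy
    linarith
  ext i j
  have := key (Pi.single i 1) (Pi.single j 1)
  rwa [QB.single_dot_mulVec, QB.single_dot_mulVec] at this

lemma QB.posDef_dot {M : Matrix ι ι ℝ} (hM : M.PosDef) {x : ι → ℝ} (hx : x ≠ 0) :
    0 < x ⬝ᵥ M *ᵥ x := by simpa using hM.dotProduct_mulVec_pos hx

lemma QB.posDef_dot_nonneg {M : Matrix ι ι ℝ} (hM : M.PosDef) (x : ι → ℝ) :
    0 ≤ x ⬝ᵥ M *ᵥ x := by simpa using hM.posSemidef.dotProduct_mulVec_nonneg x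

lemma QB.posDef_transpose_eq {M : Matrix ι ι ℝ} (hM : M.PosDef) : Mᵀ = M := by
  have := hM.isHermitian
  rwa [IsHermitian, conjTranspose_eq_transpose_of_trivial] at this

lemma QB.dot_smul_smul (A : Matrix ι ι ℝ) (t : ℝ) (z : ι → ℝ) :
    (t • z) ⬝ᵥ A *ᵥ (t • z) = t ^ 2 * (z ⬝ᵥ A *ᵥ z) := by
  simp only [mulVec_smul, smul_dotProduct, dotProduct_smul, smul_eq_mul]; ring

lemma QB.ell_subset_le {A B : Matrix ι ι ℝ} (hA : A.PosDef)
    (h : {z : ι → ℝ | z ⬝ᵥ A *ᵥ z ≤ 1} ⊆ {z | z ⬝ᵥ B *ᵥ z ≤ 1}) :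
    ∀ z, z ⬝ᵥ B *ᵥ z ≤ z ⬝ᵥ A *ᵥ z := by
  intro z
  by_cases hz : z = 0
  · simp [hz]
  · have hc : 0 < z ⬝ᵥ A *ᵥ z := QB.posDef_dot hA hz
    set c := z ⬝ᵥ A *ᵥ z with hcdef
    have hs : 0 < Real.sqrt c := Real.sqrt_pos.mpr hc
    have hs2 : Real.sqrt c ^ 2 = c := Real.sq_sqrt hc.le
    have ht2 : ((Real.sqrt c)⁻¹) ^ 2 * c = 1 := by
      rw [← hs2]; field_simp; rw [Real.sqrt_sq hs.le]
    have hmem : ((Real.sqrt c)⁻¹ • z) ∈ {z : ι → ℝ | z ⬝ᵥ A *ᵥ z ≤ 1} := by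
      simp only [Set.mem_setOf_eq, QB.dot_smul_smul, ← hcdef]
      rw [ht2]
    have h2 := h hmem
    simp only [Set.mem_setOf_eq, QB.dot_smul_smul] at h2
    nlinarith [sq_nonneg ((Real.sqrt c)⁻¹)]

lemma QB.ell_eq_iff {A B : Matrix ι ι ℝ} (hA : A.PosDef) (hB : B.PosDef) :
    {z : ι → ℝ | z ⬝ᵥ A *ᵥ z ≤ 1} = {z | z ⬝ᵥ B *ᵥ z ≤ 1} ↔ A = B := by
  constructor
  · intro h
    refine QB.qf_eq (QB.posDef_transpose_eq hA) (QB.posDef_transpose_eq hB) fun z => ?_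
    exact le_antisymm (QB.ell_subset_le hB h.ge.subset z) (QB.ell_subset_le hA h.le.subset z)
  · rintro rfl; rfl

lemma QB.support_iff {A B : Matrix ι ι ℝ} (hA : A.PosDef) (hB : B.PosDef) (hAB : A * B = 1)
    {c : ℝ} (hc : 0 < c) (u : ι → ℝ) :
    (∀ z, z ⬝ᵥ A *ᵥ z ≤ 1 → z ⬝ᵥ u ≤ c) ↔ u ⬝ᵥ B *ᵥ u ≤ c ^ 2 := by
  have hABu : A *ᵥ (B *ᵥ u) = u := by rw [mulVec_mulVec, hAB, one_mulVec]
  have hBuu : (B *ᵥ u) ⬝ᵥ u = u ⬝ᵥ B *ᵥ u := dotProduct_comm _ _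
  have hd0 : 0 ≤ u ⬝ᵥ B *ᵥ u := QB.posDef_dot_nonneg hB u
  set d := u ⬝ᵥ B *ᵥ u with hd
  constructor
  · intro h
    rcases eq_or_lt_of_le hd0 with h0 | hdpos
    · nlinarith
    · have hs : 0 < Real.sqrt d := Real.sqrt_pos.mpr hdpos
      have hs2 : Real.sqrt d ^ 2 = d := Real.sq_sqrt hd0
      have ht2 : ((Real.sqrt d)⁻¹) ^ 2 * d = 1 := by rw [← hs2]; field_simp; rw [Real.sqrt_sq hs.le]
      have hAz : ((Real.sqrt d)⁻¹ • (B *ᵥ u)) ⬝ᵥ A *ᵥ ((Real.sqrt d)⁻¹ • (B *ᵥ u)) ≤ 1 := by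
        rw [QB.dot_smul_smul]
        simp only [hABu, hBuu, ← hd]
        rw [ht2]
      have h2 := h _ hAz
      rw [smul_dotProduct, hBuu, smul_eq_mul] at h2
      have hval : (Real.sqrt d)⁻¹ * d = Real.sqrt d := by
        rw [← hs2]; field_simp; rw [Real.sqrt_sq hs.le]
      rw [hval] at h2
      nlinarith
  · intro h z hz
    have hsym : Aᵀ = A := QB.posDef_transpose_eq hA
    set v := B *ᵥ u with hv
    have hexp : ∀ t : ℝ, 0 ≤ d * (t * t) + (2 * (z ⬝ᵥ u)) * t + z ⬝ᵥ A *ᵥ z := by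
      intro t
      have hpsd : 0 ≤ (z + t • v) ⬝ᵥ A *ᵥ (z + t • v) := QB.posDef_dot_nonneg hA _
      have hexp2 : (z + t • v) ⬝ᵥ A *ᵥ (z + t • v)
          = z ⬝ᵥ A *ᵥ z + 2 * t * (z ⬝ᵥ u) + t * t * d := by
        simp only [mulVec_add, dotProduct_add, add_dotProduct, mulVec_smul, smul_dotProduct,
          dotProduct_smul, smul_eq_mul]
        rw [QB.dot_symm hsym v z]
        simp only [hABu, hBuu, ← hd]
        ring
      rw [hexp2] at hpsd
      linarith
    have hdisc := discrim_le_zero hexp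
    rw [discrim] at hdisc
    have hsq : (z ⬝ᵥ u) ^ 2 ≤ d * (z ⬝ᵥ A *ᵥ z) := by nlinarith
    have hAz0 : 0 ≤ z ⬝ᵥ A *ᵥ z := QB.posDef_dot_nonneg hA z
    nlinarith [hsq, h, hz, hc, hd0, hAz0]

lemma QB.posDef_smul {M : Matrix ι ι ℝ} (hM : M.PosDef) {c : ℝ} (hc : 0 < c) :
    (c • M).PosDef := by
  refine Matrix.PosDef.of_dotProduct_mulVec_pos ?_ ?_
  · rw [IsHermitian, conjTranspose_eq_transpose_of_trivial, transpose_smul,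
      QB.posDef_transpose_eq hM]
  · intro x hx
    have := QB.posDef_dot hM hx
    simpa [smul_mulVec, dotProduct_smul] using mul_pos hc this

lemma QB.posDef_conj {M N : Matrix ι ι ℝ} (hM : M.PosDef) (hN : IsUnit N.det) :
    (N * M * Nᵀ).PosDef := by
  have hNt : IsUnit (Nᵀ).det := by rwa [det_transpose]
  refine Matrix.PosDef.of_dotProduct_mulVec_pos ?_ ?_
  · rw [IsHermitian, conjTranspose_eq_transpose_of_trivial, transpose_mul, transpose_mul,
      transpose_transpose, QB.posDef_transpose_eq hM, Matrix.mul_assoc]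
  · intro x hx
    have hx' : Nᵀ *ᵥ x ≠ 0 := by
      intro h0
      apply hx
      have h1 := congrArg (fun v => (Nᵀ)⁻¹ *ᵥ v) h0
      simpa [mulVec_mulVec, nonsing_inv_mul _ hNt, one_mulVec] using h1
    have hpos := QB.posDef_dot hM hx'
    have heq : x ⬝ᵥ (N * M * Nᵀ) *ᵥ x = (Nᵀ *ᵥ x) ⬝ᵥ M *ᵥ (Nᵀ *ᵥ x) := by
      conv_lhs => rw [Matrix.mul_assoc, ← mulVec_mulVec]
      rw [dotProduct_mulVec, ← mulVec_transpose, ← mulVec_mulVec]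
    simpa [heq] using hpos

end Aux

section Dual

open scoped MatrixOrder

variable {n : ℕ}

lemma QB.dual_ellipsoid {A B : Matrix (Fin n ⊕ Fin n) (Fin n ⊕ Fin n) ℝ}
    (hA : A.PosDef) (hB : B.PosDef) (hAB : A * B = 1) {c : ℝ} (hc : 0 < c) :
    sympDual n c {z | z ⬝ᵥ A *ᵥ z ≤ 1}
      = {w | w ⬝ᵥ ((c ^ 2)⁻¹ • (Jmat n * B * (Jmat n)ᵀ)) *ᵥ w ≤ 1} := by
  have hc2 : (0:ℝ) < c ^ 2 := by positivity
  ext w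
  have hkey : ∀ z, symp n z w = z ⬝ᵥ ((Jmat n)ᵀ *ᵥ w) := by
    intro z
    rw [symp, dotProduct_comm, dotProduct_mulVec, ← mulVec_transpose, dotProduct_comm]
  have hsup := QB.support_iff hA hB hAB hc ((Jmat n)ᵀ *ᵥ w)
  have hquad : ((Jmat n)ᵀ *ᵥ w) ⬝ᵥ B *ᵥ ((Jmat n)ᵀ *ᵥ w)
      = w ⬝ᵥ (Jmat n * B * (Jmat n)ᵀ) *ᵥ w := by
    conv_rhs => rw [Matrix.mul_assoc, ← mulVec_mulVec, dotProduct_mulVec,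
      ← mulVec_transpose, ← mulVec_mulVec]
  simp only [sympDual, Set.mem_setOf_eq]
  constructor
  · intro h
    have h1 : ((Jmat n)ᵀ *ᵥ w) ⬝ᵥ B *ᵥ ((Jmat n)ᵀ *ᵥ w) ≤ c ^ 2 :=
      hsup.mp fun z hz => by rw [← hkey z]; exact h z hz
    rw [hquad] at h1
    simp only [smul_mulVec, dotProduct_smul, smul_eq_mul]
    calc (c ^ 2)⁻¹ * (w ⬝ᵥ (Jmat n * B * (Jmat n)ᵀ) *ᵥ w) ≤ (c ^ 2)⁻¹ * c ^ 2 :=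
          mul_le_mul_of_nonneg_left h1 (by positivity)
      _ = 1 := inv_mul_cancel₀ hc2.ne'
  · intro h z hz
    rw [hkey z]
    refine hsup.mpr ?_ z hz
    rw [hquad]
    simp only [smul_mulVec, dotProduct_smul, smul_eq_mul] at h
    calc w ⬝ᵥ (Jmat n * B * (Jmat n)ᵀ) *ᵥ w
        = c ^ 2 * ((c ^ 2)⁻¹ * (w ⬝ᵥ (Jmat n * B * (Jmat n)ᵀ) *ᵥ w)) := by
          rw [← mul_assoc, mul_inv_cancel₀ hc2.ne', one_mul]
      _ ≤ c ^ 2 * 1 := mul_le_mul_of_nonneg_left h hc2.le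
      _ = c ^ 2 := mul_one _

lemma QB.image_ball {S : Matrix (Fin n ⊕ Fin n) (Fin n ⊕ Fin n) ℝ} (hS : IsUnit S.det)
    (c : ℝ) : S.mulVec '' ball2n n c = {z | z ⬝ᵥ ((S⁻¹)ᵀ * S⁻¹) *ᵥ z ≤ c} := by
  have hq : ∀ v : PS n, v ⬝ᵥ ((S⁻¹)ᵀ * S⁻¹) *ᵥ v = (S⁻¹ *ᵥ v) ⬝ᵥ (S⁻¹ *ᵥ v) := by
    intro v
    rw [← mulVec_mulVec, dotProduct_mulVec, ← mulVec_transpose, transpose_transpose]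
  ext z
  constructor
  · rintro ⟨y, hy, rfl⟩
    simp only [Set.mem_setOf_eq, hq, mulVec_mulVec, nonsing_inv_mul _ hS, one_mulVec]
    exact hy
  · intro hz
    simp only [Set.mem_setOf_eq] at hz
    refine ⟨S⁻¹ *ᵥ z, ?_, by rw [mulVec_mulVec, mul_nonsing_inv _ hS, one_mulVec]⟩
    show (S⁻¹ *ᵥ z) ⬝ᵥ (S⁻¹ *ᵥ z) ≤ c
    rw [← hq z]
    exact hz

lemma QB.ell_rescale {Q : Matrix (Fin n ⊕ Fin n) (Fin n ⊕ Fin n) ℝ} {c : ℝ} (hc : 0 < c) :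
    {z : PS n | z ⬝ᵥ Q *ᵥ z ≤ c} = {z | z ⬝ᵥ (c⁻¹ • Q) *ᵥ z ≤ 1} := by
  ext z
  simp only [Set.mem_setOf_eq, smul_mulVec, dotProduct_smul, smul_eq_mul]
  constructor
  · intro h
    calc c⁻¹ * (z ⬝ᵥ Q *ᵥ z) ≤ c⁻¹ * c := mul_le_mul_of_nonneg_left h (by positivity)
      _ = 1 := inv_mul_cancel₀ hc.ne'
  · intro h
    calc z ⬝ᵥ Q *ᵥ z = c * (c⁻¹ * (z ⬝ᵥ Q *ᵥ z)) := by
          rw [← mul_assoc, mul_inv_cancel₀ hc.ne', one_mul]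
      _ ≤ c * 1 := mul_le_mul_of_nonneg_left h hc.le
      _ = c := mul_one _

lemma QB.sp_isUnit_det {S : Matrix (Fin n ⊕ Fin n) (Fin n ⊕ Fin n) ℝ} (hS : S ∈ Sp n) :
    IsUnit S.det := by
  have h := congrArg Matrix.det (hS : Sᵀ * Jmat n * S = Jmat n)
  rw [det_mul, det_mul, det_transpose] at h
  have hJ : (Jmat n).det ≠ 0 := by
    have := QB.isUnit_det_Jmat n
    exact this.ne_zero
  refine isUnit_iff_ne_zero.mpr fun h0 => hJ ?_
  rw [h0] at h
  simpa using h.symm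

lemma QB.core {G : Matrix (Fin n ⊕ Fin n) (Fin n ⊕ Fin n) ℝ} (hG : G.PosDef) :
    Jmat n * G * (Jmat n)ᵀ = G⁻¹ ↔ ∃ S ∈ Sp n, G = S * Sᵀ := by
  constructor
  · intro hJG
    have hPS := hG.posSemidef
    set P := CFC.sqrt G with hPdef
    have hP : P.PosSemidef := (CFC.sqrt_nonneg G).posSemidef
    have hPP : P * P = G := CFC.sqrt_mul_sqrt_self G hPS.nonneg
    have hPt : Pᵀ = P := by
      have := hP.isHermitian
      rwa [IsHermitian, conjTranspose_eq_transpose_of_trivial] at this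
    have hdetG : IsUnit G.det := isUnit_iff_ne_zero.mpr hG.det_pos.ne'
    have hdetP : IsUnit P.det := by
      have hmul : P.det * P.det = G.det := by rw [← det_mul, hPP]
      exact isUnit_of_mul_isUnit_left (by rwa [hmul])
    have hQpsd : (Jmat n * P * (Jmat n)ᵀ).PosSemidef := by
      have := hP.mul_mul_conjTranspose_same (Jmat n)
      rwa [conjTranspose_eq_transpose_of_trivial] at this
    have hPinvpsd : (P⁻¹).PosSemidef := by
      have h2 := hP.conjTranspose_mul_mul_same (P⁻¹)
      rwa [conjTranspose_eq_transpose_of_trivial, transpose_nonsing_inv, hPt,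
        Matrix.mul_assoc, mul_nonsing_inv _ hdetP, Matrix.mul_one] at h2
    have hQ2 : (Jmat n * P * (Jmat n)ᵀ) ^ 2 = (P⁻¹) ^ 2 := by
      have e2 : (P⁻¹) ^ 2 = G⁻¹ := by rw [pow_two, ← Matrix.mul_inv_rev, hPP]
      rw [pow_two, e2]
      have assoc1 : Jmat n * P * (Jmat n)ᵀ * (Jmat n * P * (Jmat n)ᵀ)
          = Jmat n * (P * (((Jmat n)ᵀ * Jmat n) * (P * (Jmat n)ᵀ))) := by
        simp only [Matrix.mul_assoc]
      rw [assoc1, QB.Jmat_transpose_mul, Matrix.one_mul, ← Matrix.mul_assoc P,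
        hPP, ← Matrix.mul_assoc, hJG]
    have hQP : Jmat n * P * (Jmat n)ᵀ = P⁻¹ := (CFC.sq_eq_sq_iff _ _ hQpsd.nonneg hPinvpsd.nonneg).mp hQ2
    refine ⟨P, ?_, by rw [← hPP, hPt]⟩
    show Pᵀ * Jmat n * P = Jmat n
    rw [hPt]
    have h3 : P * (Jmat n * P * (Jmat n)ᵀ) = 1 := by rw [hQP, mul_nonsing_inv _ hdetP]
    calc P * Jmat n * P
        = P * (Jmat n * P * (Jmat n)ᵀ) * Jmat n := by
          simp only [Matrix.mul_assoc, QB.Jmat_transpose_mul, Matrix.mul_one]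
      _ = 1 * Jmat n := by rw [h3]
      _ = Jmat n := Matrix.one_mul _
  · rintro ⟨S, hS, rfl⟩
    have hSJ : Sᵀ * Jmat n * S = Jmat n := hS
    have hdS : IsUnit S.det := QB.sp_isUnit_det hS
    have hdSt : IsUnit (Sᵀ).det := by rwa [det_transpose]
    have hJS : Jmat n * S = (Sᵀ)⁻¹ * Jmat n := by
      have h1 := congrArg (fun M => (Sᵀ)⁻¹ * M) hSJ
      simpa only [← Matrix.mul_assoc, nonsing_inv_mul _ hdSt, Matrix.one_mul] using h1
    have hSJt : Sᵀ * (Jmat n)ᵀ = (Jmat n)ᵀ * S⁻¹ := by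
      have ht := congrArg Matrix.transpose hSJ
      rw [transpose_mul, transpose_mul, transpose_transpose] at ht
      have h2 := congrArg (fun M => M * S⁻¹) ht
      simpa only [Matrix.mul_assoc, mul_nonsing_inv _ hdS, Matrix.mul_one] using h2
    have key : Jmat n * (S * Sᵀ) * (Jmat n)ᵀ = (Sᵀ)⁻¹ * S⁻¹ := by
      calc Jmat n * (S * Sᵀ) * (Jmat n)ᵀ
          = (Jmat n * S) * (Sᵀ * (Jmat n)ᵀ) := by simp only [Matrix.mul_assoc]
        _ = ((Sᵀ)⁻¹ * Jmat n) * ((Jmat n)ᵀ * S⁻¹) := by rw [hJS, hSJt]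
        _ = (Sᵀ)⁻¹ * (Jmat n * (Jmat n)ᵀ) * S⁻¹ := by simp only [Matrix.mul_assoc]
        _ = (Sᵀ)⁻¹ * S⁻¹ := by rw [QB.Jmat_mul_transpose, Matrix.mul_one]
    rw [key, Matrix.mul_inv_rev]

lemma QB.bridge {ℏ : ℝ} (hℏ : 0 < ℏ) {Sig : Matrix (Fin n ⊕ Fin n) (Fin n ⊕ Fin n) ℝ}
    (hSig : Sig.PosDef) :
    (ℏ ^ 2)⁻¹ • (Jmat n * ((2:ℝ) • Sig) * (Jmat n)ᵀ) = (2:ℝ)⁻¹ • Sig⁻¹ ↔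
      ∃ S ∈ Sp n, (2:ℝ)⁻¹ • Sig⁻¹ = ℏ⁻¹ • ((S⁻¹)ᵀ * S⁻¹) := by
  have hdetSig : IsUnit Sig.det := isUnit_iff_ne_zero.mpr hSig.det_pos.ne'
  set G : Matrix (Fin n ⊕ Fin n) (Fin n ⊕ Fin n) ℝ := ((2 / ℏ : ℝ)) • Sig with hGdef
  have hGpd : G.PosDef := QB.posDef_smul hSig (by positivity)
  have hdetG : IsUnit G.det := isUnit_iff_ne_zero.mpr hGpd.det_pos.ne'
  have e2 : G⁻¹ = ℏ • ((2:ℝ)⁻¹ • Sig⁻¹) := by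
    apply inv_eq_left_inv
    rw [hGdef, smul_smul, Matrix.smul_mul, Matrix.mul_smul, smul_smul,
      nonsing_inv_mul _ hdetSig]
    rw [show ℏ * 2⁻¹ * (2 / ℏ) = 1 by field_simp]
    rw [one_smul]
  have e1 : Jmat n * G * (Jmat n)ᵀ
      = ℏ • ((ℏ ^ 2)⁻¹ • (Jmat n * ((2:ℝ) • Sig) * (Jmat n)ᵀ)) := by
    rw [hGdef]
    simp only [Matrix.mul_smul, Matrix.smul_mul, smul_smul]
    congr 1
    field_simp
  constructor
  · intro h
    obtain ⟨S, hS, hGS⟩ := (QB.core hGpd).mp (by rw [e1, h, ← e2])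
    refine ⟨S, hS, ?_⟩
    have hGinv : G⁻¹ = (S⁻¹)ᵀ * S⁻¹ := by
      rw [hGS, Matrix.mul_inv_rev, transpose_nonsing_inv]
    rw [e2] at hGinv
    rw [← hGinv, smul_smul, inv_mul_cancel₀ hℏ.ne', one_smul]
  · rintro ⟨S, hS, hA⟩
    have hdS : IsUnit S.det := QB.sp_isUnit_det hS
    have hdSS : IsUnit (S * Sᵀ).det := by
      rw [det_mul, det_transpose]; exact hdS.mul hdS
    apply smul_right_injective (Matrix (Fin n ⊕ Fin n) (Fin n ⊕ Fin n) ℝ) hℏ.ne'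
    show ℏ • ((ℏ ^ 2)⁻¹ • (Jmat n * ((2:ℝ) • Sig) * (Jmat n)ᵀ)) = ℏ • ((2:ℝ)⁻¹ • Sig⁻¹)
    rw [← e1, ← e2]
    apply (QB.core hGpd).mpr
    refine ⟨S, hS, ?_⟩
    have hGinv : G⁻¹ = (S * Sᵀ)⁻¹ := by
      rw [e2, hA, Matrix.mul_inv_rev, transpose_nonsing_inv, smul_smul,
        mul_inv_cancel₀ hℏ.ne', one_smul]
    have := congrArg Inv.inv hGinv
    rwa [nonsing_inv_nonsing_inv _ hdetG, nonsing_inv_nonsing_inv _ hdSS] at this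

end Dual

/-- The covariance ellipsoid equals its symplectic polar dual iff it is a quantum blob. -/
theorem sympDual_eq_iff_quantum_blob (n : ℕ) (ℏ : ℝ) (hℏ : 0 < ℏ)
    (Sig : Matrix (Fin n ⊕ Fin n) (Fin n ⊕ Fin n) ℝ) (hSig : Sig.PosDef) :
    sympDual n ℏ (covEll n Sig) = covEll n Sig ↔
      ∃ S ∈ Sp n, covEll n Sig = S.mulVec '' ball2n n ℏ := by
  have hdetSig : IsUnit Sig.det := isUnit_iff_ne_zero.mpr hSig.det_pos.ne'
  have hA : ((2:ℝ)⁻¹ • Sig⁻¹).PosDef := QB.posDef_smul hSig.inv (by norm_num)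
  have hB : (((2:ℝ)) • Sig).PosDef := QB.posDef_smul hSig (by norm_num)
  have hAB : ((2:ℝ)⁻¹ • Sig⁻¹) * ((2:ℝ) • Sig) = 1 := by
    rw [Matrix.smul_mul, Matrix.mul_smul, smul_smul, nonsing_inv_mul _ hdetSig]
    norm_num
  have hcov : covEll n Sig = {z : PS n | z ⬝ᵥ ((2:ℝ)⁻¹ • Sig⁻¹) *ᵥ z ≤ 1} := by
    ext z
    simp only [covEll, Set.mem_setOf_eq, smul_mulVec, dotProduct_smul, smul_eq_mul]
    rw [dotProduct_comm, one_div]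
  have hD : ((ℏ ^ 2)⁻¹ • (Jmat n * ((2:ℝ) • Sig) * (Jmat n)ᵀ)).PosDef :=
    QB.posDef_smul (QB.posDef_conj hB (QB.isUnit_det_Jmat n)) (by positivity)
  rw [hcov, QB.dual_ellipsoid hA hB hAB hℏ]
  rw [QB.ell_eq_iff hD hA]
  rw [QB.bridge hℏ hSig]
  apply exists_congr
  intro S
  apply and_congr_right
  intro hS
  have hdS : IsUnit S.det := QB.sp_isUnit_det hS
  have hE : (ℏ⁻¹ • ((S⁻¹)ᵀ * S⁻¹)).PosDef := by
    have h1 : ((S⁻¹)ᵀ * (1 : Matrix (Fin n ⊕ Fin n) (Fin n ⊕ Fin n) ℝ) * ((S⁻¹)ᵀ)ᵀ).PosDef :=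
      QB.posDef_conj Matrix.PosDef.one (by
        rw [det_transpose]
        have : S⁻¹.det * S.det = 1 := S.det_nonsing_inv_mul_det hdS
        exact isUnit_iff_exists_inv.mpr ⟨_, this⟩)
    rw [Matrix.mul_one, transpose_transpose] at h1
    exact QB.posDef_smul h1 (inv_pos.mpr hℏ)
  rw [QB.image_ball hdS, QB.ell_rescale hℏ, QB.ell_eq_iff hA hE]
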